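/- There is a universal constant C such that for every even natural number t there exist a finite alphabet Σ with |Σ| ≤ C·2^t and maps S, T from tensors of order t to strings over Σ of length exactly 2^t, such that for all tensors u, v of order t: LCS(S(u), T(v)) = 2^{t/2} · s(u,v). -/

import Mathlib

/-- Alternating fold over the Boolean hypercube: flag `true` means the first
remaining coordinate is combined with AND, `false` means OR; flags alternate. -/
def altFold : (n : ℕ) → Bool → ((Fin n → Bool) → Bool) → Bool
  | 0, _, f => f Fin.elim0
  | n + 1, q, f =>
    if q then
      altFold n (!q) (fun x => f (Fin.cons false x)) &&
        altFold n (!q) (fun x => f (Fin.cons true x))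
    else
      altFold n (!q) (fun x => f (Fin.cons false x)) ||
        altFold n (!q) (fun x => f (Fin.cons true x))

/-- Alternating product `p_alt(u,v)`: AND over odd-indexed coordinates
(i₁, i₃, …) and OR over even-indexed ones (i₂, i₄, …), applied to the
coordinatewise AND of `u` and `v`. -/
def altProd {t : ℕ} (u v : (Fin t → Bool) → Bool) : Bool :=
  altFold t true fun x => u x && v x

/-- A tensor is ∧-invariant if it does not depend on the odd-indexed
coordinates i₁, i₃, …, i_{t-1} (which have 0-based indices 0, 2, …). -/
def AndInvariant {t : ℕ} (u : (Fin t → Bool) → Bool) : Prop :=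
  ∀ x y : Fin t → Bool, (∀ i : Fin t, i.1 % 2 = 1 → x i = y i) → u x = u y

/-- A tensor is max-invariant if it does not depend on the even-indexed
coordinates i₂, i₄, …, i_t (which have 0-based indices 1, 3, …). -/
def MaxInvariant {t : ℕ} (u : (Fin t → Bool) → Bool) : Prop :=
  ∀ x y : Fin t → Bool, (∀ i : Fin t, i.1 % 2 = 0 → x i = y i) → u x = u y

/-- Alternating tropical fold: flag `true` means the first remaining coordinate
is averaged (𝔼), `false` means it is maximized; flags alternate. -/
def tropFold : (n : ℕ) → Bool → ((Fin n → Bool) → ℚ) → ℚ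
  | 0, _, f => f Fin.elim0
  | n + 1, q, f =>
    if q then
      (tropFold n (!q) (fun x => f (Fin.cons false x)) +
        tropFold n (!q) (fun x => f (Fin.cons true x))) / 2
    else
      max (tropFold n (!q) (fun x => f (Fin.cons false x)))
        (tropFold n (!q) (fun x => f (Fin.cons true x)))

/-- Tropical similarity `s(u,v)`: 𝔼 over odd-indexed coordinates and max over
even-indexed ones, applied to the coordinatewise product of `u` and `v`. -/
def tropSim {t : ℕ} (u v : (Fin t → Bool) → Bool) : ℚ :=
  tropFold t true fun x => (if u x then (1 : ℚ) else 0) * (if v x then (1 : ℚ) else 0)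

/-- `LCSv a b`: the maximum length of a common (not necessarily contiguous)
subsequence of the lists `a` and `b`. -/
noncomputable def LCSv {α : Type} (a b : List α) : ℕ :=
  sSup {n | ∃ c : List α, c.length = n ∧ c.Sublist a ∧ c.Sublist b}

namespace TropGadget

lemma lcs_bdd {α : Type} (a b : List α) :
    BddAbove {n | ∃ c : List α, c.length = n ∧ c.Sublist a ∧ c.Sublist b} :=
  ⟨a.length, fun _ ⟨_, hc, ha, _⟩ => hc ▸ ha.length_le⟩

lemma length_le_LCSv {α : Type} {a b c : List α} (ha : c.Sublist a) (hb : c.Sublist b) :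
    c.length ≤ LCSv a b :=
  le_csSup (lcs_bdd a b) ⟨c, rfl, ha, hb⟩

lemma exists_LCSv {α : Type} (a b : List α) :
    ∃ c : List α, c.length = LCSv a b ∧ c.Sublist a ∧ c.Sublist b :=
  Nat.sSup_mem (s := {n | ∃ c : List α, c.length = n ∧ c.Sublist a ∧ c.Sublist b})
    ⟨0, [], rfl, List.nil_sublist a, List.nil_sublist b⟩ (lcs_bdd a b)

lemma LCSv_eq {α : Type} {a b : List α} {n : ℕ}
    (h1 : ∃ c : List α, c.length = n ∧ c.Sublist a ∧ c.Sublist b)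
    (h2 : ∀ c : List α, c.Sublist a → c.Sublist b → c.length ≤ n) :
    LCSv a b = n := by
  refine le_antisymm (csSup_le ⟨n, h1⟩ ?_) (le_csSup (lcs_bdd a b) h1)
  rintro m ⟨c, rfl, ha, hb⟩; exact h2 c ha hb

lemma LCSv_map {α β : Type} {f : α → β} (hf : Function.Injective f) (a b : List α) :
    LCSv (a.map f) (b.map f) = LCSv a b := by
  obtain ⟨c, hc, hca, hcb⟩ := exists_LCSv a b
  refine LCSv_eq ⟨c.map f, by simp [hc], hca.map f, hcb.map f⟩ ?_
  intro d hda hdb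
  obtain ⟨c₁, hc₁, rfl⟩ := List.sublist_map_iff.mp hda
  obtain ⟨c₂, hc₂, he⟩ := List.sublist_map_iff.mp hdb
  have h12 : c₁ = c₂ := (List.map_injective_iff.mpr hf) he
  simpa using length_le_LCSv hc₁ (h12 ▸ hc₂)

lemma split_filter {α : Type} {c A B : List α} {p : α → Bool} (h : c = A ++ B)
    (hA : ∀ x ∈ A, p x = true) (hB : ∀ x ∈ B, p x = false) :
    A = c.filter p ∧ B = c.filter (fun x => !p x) := by
  subst h
  constructor
  · rw [List.filter_append, List.filter_eq_self.mpr hA,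
      List.filter_eq_nil_iff.mpr (by intro x hx; simp [hB x hx]), List.append_nil]
  · rw [List.filter_append, List.filter_eq_nil_iff.mpr (by intro x hx; simp [hA x hx]),
      List.filter_eq_self.mpr (by intro x hx; simp [hB x hx]), List.nil_append]


lemma LCSv_append_add {N : ℕ} {a₁ a₂ b₁ b₂ : List ℕ}
    (ha₁ : ∀ x ∈ a₁, x < N) (hb₁ : ∀ x ∈ b₁, x < N)
    (ha₂ : ∀ x ∈ a₂, ¬ x < N) (hb₂ : ∀ x ∈ b₂, ¬ x < N) :
    LCSv (a₁ ++ a₂) (b₁ ++ b₂) = LCSv a₁ b₁ + LCSv a₂ b₂ := by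
  obtain ⟨c₁, hc₁, h₁a, h₁b⟩ := exists_LCSv a₁ b₁
  obtain ⟨c₂, hc₂, h₂a, h₂b⟩ := exists_LCSv a₂ b₂
  refine LCSv_eq ⟨c₁ ++ c₂, by simp [hc₁, hc₂], h₁a.append h₂a, h₁b.append h₂b⟩ ?_
  intro c hca hcb
  obtain ⟨d₁, d₂, hd, hd₁, hd₂⟩ := List.sublist_append_iff.mp hca
  obtain ⟨e₁, e₂, he, he₁, he₂⟩ := List.sublist_append_iff.mp hcb
  have Hd := split_filter (p := fun x => decide (x < N)) hd
    (fun x hx => decide_eq_true (ha₁ x (hd₁.subset hx)))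
    (fun x hx => decide_eq_false (ha₂ x (hd₂.subset hx)))
  have He := split_filter (p := fun x => decide (x < N)) he
    (fun x hx => decide_eq_true (hb₁ x (he₁.subset hx)))
    (fun x hx => decide_eq_false (hb₂ x (he₂.subset hx)))
  have e1 : d₁ = e₁ := Hd.1.trans He.1.symm
  have e2 : d₂ = e₂ := Hd.2.trans He.2.symm
  calc c.length = d₁.length + d₂.length := by rw [hd]; simp
    _ ≤ LCSv a₁ b₁ + LCSv a₂ b₂ :=
      Nat.add_le_add (length_le_LCSv hd₁ (e1 ▸ he₁)) (length_le_LCSv hd₂ (e2 ▸ he₂))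

lemma LCSv_append_max {N : ℕ} {a₁ a₂ b₁ b₂ : List ℕ}
    (ha₁ : ∀ x ∈ a₁, x < N) (hb₁ : ∀ x ∈ b₁, x < N)
    (ha₂ : ∀ x ∈ a₂, ¬ x < N) (hb₂ : ∀ x ∈ b₂, ¬ x < N) :
    LCSv (a₁ ++ a₂) (b₂ ++ b₁) = max (LCSv a₁ b₁) (LCSv a₂ b₂) := by
  obtain ⟨c₁, hc₁, h₁a, h₁b⟩ := exists_LCSv a₁ b₁
  obtain ⟨c₂, hc₂, h₂a, h₂b⟩ := exists_LCSv a₂ b₂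
  have w : ∃ c : List ℕ, c.length = max (LCSv a₁ b₁) (LCSv a₂ b₂) ∧
      c.Sublist (a₁ ++ a₂) ∧ c.Sublist (b₂ ++ b₁) := by
    rcases le_total (LCSv a₁ b₁) (LCSv a₂ b₂) with h | h
    · exact ⟨c₂, by rw [hc₂, max_eq_right h],
        h₂a.trans (List.sublist_append_right _ _), h₂b.trans (List.sublist_append_left _ _)⟩
    · exact ⟨c₁, by rw [hc₁, max_eq_left h],
        h₁a.trans (List.sublist_append_left _ _), h₁b.trans (List.sublist_append_right _ _)⟩
  refine LCSv_eq w ?_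
  intro c hca hcb
  obtain ⟨d₁, d₂, hd, hd₁, hd₂⟩ := List.sublist_append_iff.mp hca
  obtain ⟨e₂, e₁, he, he₂, he₁⟩ := List.sublist_append_iff.mp hcb
  have Hd := split_filter (p := fun x => decide (x < N)) hd
    (fun x hx => decide_eq_true (ha₁ x (hd₁.subset hx)))
    (fun x hx => decide_eq_false (ha₂ x (hd₂.subset hx)))
  have He := split_filter (p := fun x => !decide (x < N)) he
    (fun x hx => by simp [hb₂ x (he₂.subset hx)])
    (fun x hx => by simp [hb₁ x (he₁.subset hx)])
  have e1 : d₁ = e₁ := by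
    rw [Hd.1, He.2]; congr 1; funext x; simp
  have e2 : d₂ = e₂ := Hd.2.trans He.1.symm
  have hswap : d₁ ++ d₂ = d₂ ++ d₁ := hd.symm.trans (by rw [he, ← e1, ← e2])
  rcases d₁ with _ | ⟨x, t₁⟩
  · rw [hd, List.nil_append]
    exact le_max_of_le_right (length_le_LCSv hd₂ (e2 ▸ he₂))
  · rcases d₂ with _ | ⟨y, t₂⟩
    · rw [hd, List.append_nil]
      exact le_max_of_le_left (length_le_LCSv hd₁ (e1 ▸ he₁))
    · exfalso
      have hx : x < N := ha₁ x (hd₁.subset List.mem_cons_self)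
      have hy : ¬ y < N := ha₂ y (hd₂.subset List.mem_cons_self)
      have : x = y := by
        have := congrArg List.head? hswap
        simpa using this
      omega

def encS : (n : ℕ) → Bool → ((Fin n → Bool) → Bool) → List ℕ
  | 0, _, f => [if f Fin.elim0 then 0 else 1]
  | n + 1, q, f =>
      encS n (!q) (fun x => f (Fin.cons false x)) ++
        (encS n (!q) (fun x => f (Fin.cons true x))).map (· + 3 * 2 ^ n)

def encT : (n : ℕ) → Bool → ((Fin n → Bool) → Bool) → List ℕ
  | 0, _, g => [if g Fin.elim0 then 0 else 2]
  | n + 1, q, g =>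
      if q then
        encT n (!q) (fun x => g (Fin.cons false x)) ++
          (encT n (!q) (fun x => g (Fin.cons true x))).map (· + 3 * 2 ^ n)
      else
        (encT n (!q) (fun x => g (Fin.cons true x))).map (· + 3 * 2 ^ n) ++
          encT n (!q) (fun x => g (Fin.cons false x))

lemma encS_length : ∀ (n : ℕ) (q : Bool) (f : (Fin n → Bool) → Bool),
    (encS n q f).length = 2 ^ n
  | 0, _, _ => rfl
  | n + 1, q, f => by
    simp [encS, encS_length n, pow_succ]; ring

lemma encT_length : ∀ (n : ℕ) (q : Bool) (g : (Fin n → Bool) → Bool),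
    (encT n q g).length = 2 ^ n
  | 0, _, _ => rfl
  | n + 1, q, g => by
    rcases q <;> simp [encT, encT_length n, pow_succ] <;> ring

lemma encS_bound : ∀ (n : ℕ) (q : Bool) (f : (Fin n → Bool) → Bool),
    ∀ x ∈ encS n q f, x < 3 * 2 ^ n
  | 0, _, f => by
    intro x hx
    rw [encS, List.mem_singleton] at hx
    subst hx
    split <;> norm_num
  | n + 1, q, f => by
    intro x hx
    rw [encS, List.mem_append] at hx
    have h2 : 3 * 2 ^ (n + 1) = 3 * 2 ^ n + 3 * 2 ^ n := by ring
    rcases hx with hx | hx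
    · have := encS_bound n (!q) _ x hx; omega
    · obtain ⟨y, hy, rfl⟩ := List.mem_map.mp hx
      have := encS_bound n (!q) _ y hy; omega

lemma encT_bound : ∀ (n : ℕ) (q : Bool) (g : (Fin n → Bool) → Bool),
    ∀ x ∈ encT n q g, x < 3 * 2 ^ n
  | 0, _, g => by
    intro x hx
    rw [encT, List.mem_singleton] at hx
    subst hx
    split <;> norm_num
  | n + 1, q, g => by
    intro x hx
    have h2 : 3 * 2 ^ (n + 1) = 3 * 2 ^ n + 3 * 2 ^ n := by ring
    rcases q <;> rw [encT] at hx <;> simp only [if_true, if_false, Bool.false_eq_true,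
      ite_true, ite_false, List.mem_append] at hx <;>
    · rcases hx with hx | hx
      · first
        | (have := encT_bound n _ _ x hx; omega)
        | (obtain ⟨y, hy, rfl⟩ := List.mem_map.mp hx
           have := encT_bound n _ _ y hy; omega)
      · first
        | (have := encT_bound n _ _ x hx; omega)
        | (obtain ⟨y, hy, rfl⟩ := List.mem_map.mp hx
           have := encT_bound n _ _ y hy; omega)

def Mc : ℕ → Bool → ℕ
  | 0, _ => 1
  | n + 1, q => if q then 2 * Mc n (!q) else Mc n (!q)

lemma LCSv_single (x y : ℕ) : LCSv [x] [y] = if x = y then 1 else 0 := by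
  split
  · next h =>
    subst h
    refine LCSv_eq ⟨[x], rfl, List.Sublist.refl _, List.Sublist.refl _⟩ ?_
    intro c hc _; simpa using hc.length_le
  · next h =>
    refine LCSv_eq ⟨[], rfl, List.nil_sublist _, List.nil_sublist _⟩ ?_
    intro c hca hcb
    rcases List.sublist_singleton.mp hca with rfl | rfl
    · simp
    · rcases List.sublist_singleton.mp hcb with h' | h' <;> simp_all

lemma main_ind : ∀ (n : ℕ) (q : Bool) (f g : (Fin n → Bool) → Bool),
    (LCSv (encS n q f) (encT n q g) : ℚ) =
      (Mc n q : ℚ) *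
        tropFold n q (fun x => (if f x then (1 : ℚ) else 0) * (if g x then (1 : ℚ) else 0)) := by
  intro n
  induction n with
  | zero =>
    intro q f g
    rcases hf : f Fin.elim0 <;> rcases hg : g Fin.elim0 <;>
      simp [encS, encT, tropFold, Mc, LCSv_single, hf, hg]
  | succ n ih =>
    intro q f g
    have hshift : Function.Injective (· + 3 * 2 ^ n : ℕ → ℕ) := add_left_injective _
    have hmapS : ∀ (b : Bool) (h : (Fin n → Bool) → Bool),
        ∀ x ∈ (encS n b h).map (· + 3 * 2 ^ n), ¬ x < 3 * 2 ^ n := by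
      rintro b h x hx
      obtain ⟨y, _, rfl⟩ := List.mem_map.mp hx; omega
    have hmapT : ∀ (b : Bool) (h : (Fin n → Bool) → Bool),
        ∀ x ∈ (encT n b h).map (· + 3 * 2 ^ n), ¬ x < 3 * 2 ^ n := by
      rintro b h x hx
      obtain ⟨y, _, rfl⟩ := List.mem_map.mp hx; omega
    rcases q with _ | _
    · -- q = false : max layer
      rw [show encS (n+1) false f = encS n true (fun x => f (Fin.cons false x)) ++
            (encS n true (fun x => f (Fin.cons true x))).map (· + 3 * 2 ^ n) from rfl,
          show encT (n+1) false g = (encT n true (fun x => g (Fin.cons true x))).map (· + 3 * 2 ^ n) ++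
            encT n true (fun x => g (Fin.cons false x)) from rfl,
          LCSv_append_max (encS_bound n true _) (encT_bound n true _) (hmapS _ _) (hmapT _ _),
          LCSv_map hshift]
      push_cast [Nat.cast_max]
      rw [ih true _ _, ih true _ _]
      show _ = (Mc (n+1) false : ℚ) * max _ _
      rw [show (Mc (n+1) false : ℚ) = (Mc n true : ℚ) by norm_num [Mc]]
      rw [mul_max_of_nonneg _ _ (by positivity : (0:ℚ) ≤ (Mc n true : ℚ))]
      simp only [Bool.not_false]
    · -- q = true : average layer
      rw [show encS (n+1) true f = encS n false (fun x => f (Fin.cons false x)) ++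
            (encS n false (fun x => f (Fin.cons true x))).map (· + 3 * 2 ^ n) from rfl,
          show encT (n+1) true g = encT n false (fun x => g (Fin.cons false x)) ++
            (encT n false (fun x => g (Fin.cons true x))).map (· + 3 * 2 ^ n) from rfl,
          LCSv_append_add (encS_bound n false _) (encT_bound n false _) (hmapS _ _) (hmapT _ _),
          LCSv_map hshift]
      push_cast
      rw [ih false _ _, ih false _ _]
      show _ = (Mc (n+1) true : ℚ) * ((_ + _) / 2)
      rw [show (Mc (n+1) true : ℚ) = 2 * (Mc n false : ℚ) by norm_num [Mc]]
      simp only [Bool.not_true]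
      ring

lemma Mc_even : ∀ m : ℕ, Mc (2 * m) true = 2 ^ m
  | 0 => rfl
  | m + 1 => by
    have : 2 * (m + 1) = (2 * m) + 1 + 1 := by ring
    rw [this]
    show (if true then 2 * Mc (2*m+1) false else _) = _
    simp only [if_true]
    show 2 * (if false then _ else Mc (2*m) true) = _
    simp only [Bool.false_eq_true, if_false, Mc_even m, pow_succ]
    ring

end TropGadget

open TropGadget

/-- There is a universal constant `C` such that for every even
`t` there are an alphabet `Fin k` with `k ≤ C·2^t` and maps `S, T` from tensors
of order `t` to strings over `Fin k` of length exactly `2^t`, such that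
`LCS(S u, T v) = 2^{t/2} · s(u,v)` for all tensors `u, v` of order `t`. -/
theorem tropSim_to_LCS_gadget :
    ∃ C : ℕ, 0 < C ∧
      ∀ t : ℕ, Even t →
        ∃ k : ℕ, k ≤ C * 2 ^ t ∧
          ∃ S T : ((Fin t → Bool) → Bool) → List (Fin k),
            (∀ u : (Fin t → Bool) → Bool, (S u).length = 2 ^ t) ∧
            (∀ v : (Fin t → Bool) → Bool, (T v).length = 2 ^ t) ∧
            ∀ u v : (Fin t → Bool) → Bool,
              (LCSv (S u) (T v) : ℚ) = 2 ^ (t / 2) * tropSim u v := by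
  refine ⟨3, by norm_num, ?_⟩
  intro t ht
  refine ⟨3 * 2 ^ t, le_refl _, ?_⟩
  refine ⟨fun u => (encS t true u).pmap (fun x h => (⟨x, h⟩ : Fin (3 * 2 ^ t)))
      (encS_bound t true u),
    fun v => (encT t true v).pmap (fun x h => (⟨x, h⟩ : Fin (3 * 2 ^ t)))
      (encT_bound t true v), ?_, ?_, ?_⟩
  · intro u; simp [encS_length]
  · intro v; simp [encT_length]
  · intro u v
    obtain ⟨m, hm⟩ := ht
    have hmm : t = 2 * m := by omega
    have hS : ((encS t true u).pmap (fun x h => (⟨x, h⟩ : Fin (3 * 2 ^ t)))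
        (encS_bound t true u)).map Fin.val = encS t true u := by
      simp [List.map_pmap]
    have hT : ((encT t true v).pmap (fun x h => (⟨x, h⟩ : Fin (3 * 2 ^ t)))
        (encT_bound t true v)).map Fin.val = encT t true v := by
      simp [List.map_pmap]
    have hval := LCSv_map (f := (Fin.val : Fin (3 * 2 ^ t) → ℕ)) Fin.val_injective
      ((encS t true u).pmap (fun x h => (⟨x, h⟩ : Fin (3 * 2 ^ t))) (encS_bound t true u))
      ((encT t true v).pmap (fun x h => (⟨x, h⟩ : Fin (3 * 2 ^ t))) (encT_bound t true v))
    rw [hS, hT] at hval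
    rw [← hval, main_ind t true u v]
    have hMc : (Mc t true : ℚ) = 2 ^ (t / 2) := by
      rw [hmm, Mc_even m]
      push_cast
      congr 1
      omega
    rw [hMc]
    rfl
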